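/- Let ε ≤ 1/3, let G admit an (ε,η)-almost-clique decomposition V = V_sparse ∪ C_1 ∪ ... ∪ C_k, and let v ∈ C_i. Then the local sparsity of v satisfies ζ_v ≥ (1−3ε)·a(v)/2, where a(v) = |C_i ∖ (N(v) ∪ {v})| is the number of vertices of C_i other than v that are not adjacent to v. -/

import Mathlib

open Finset

variable {V : Type*} [Fintype V] [DecidableEq V]

/-- Nodes `u, v` are `ε`-similar if `|N(u) ∩ N(v)| ≥ (1−ε)Δ`, where `Δ` is the
maximum degree of `G`. -/
abbrev NodeSimilar (G : SimpleGraph V) [DecidableRel G.Adj] (ε : ℝ) (u v : V) : Prop :=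
  (1 - ε) * (G.maxDegree : ℝ) ≤ ((G.neighborFinset u ∩ G.neighborFinset v).card : ℝ)

/-- Nodes `u, v` are `ε`-friends if they are `ε`-similar and adjacent. -/
abbrev Friends (G : SimpleGraph V) [DecidableRel G.Adj] (ε : ℝ) (u v : V) : Prop :=
  NodeSimilar G ε u v ∧ G.Adj u v

/-- A node is `ε`-dense if it has at least `(1−ε)Δ` `ε`-friends. -/
def IsDense (G : SimpleGraph V) [DecidableRel G.Adj] (ε : ℝ) (v : V) : Prop :=
  (1 - ε) * (G.maxDegree : ℝ) ≤ ((univ.filter (fun w => Friends G ε v w)).card : ℝ)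

/-- An `(ε,η)`-almost-clique decomposition of `G`: a partition
`V = V_sparse ∪ C 0 ∪ ... ∪ C (k-1)` such that `V_sparse` contains no `η`-dense node,
`(1−ε)Δ ≤ |C i| ≤ (1+ε)Δ`, and every `v ∈ C i` has at least `(1−ε)Δ` neighbors in `C i`. -/
structure IsACD (G : SimpleGraph V) [DecidableRel G.Adj] (ε η : ℝ) {k : ℕ}
    (Vsp : Finset V) (C : Fin k → Finset V) : Prop where
  cover : ∀ v : V, v ∈ Vsp ∨ ∃ i, v ∈ C i
  disjoint_sparse : ∀ i, Disjoint Vsp (C i)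
  disjoint_cliques : ∀ i j, i ≠ j → Disjoint (C i) (C j)
  sparse_not_dense : ∀ v ∈ Vsp, ¬ IsDense G η v
  card_lower : ∀ i, (1 - ε) * (G.maxDegree : ℝ) ≤ ((C i).card : ℝ)
  card_upper : ∀ i, ((C i).card : ℝ) ≤ (1 + ε) * (G.maxDegree : ℝ)
  nbr_lower : ∀ i, ∀ v ∈ C i, (1 - ε) * (G.maxDegree : ℝ) ≤ ((G.neighborFinset v ∩ C i).card : ℝ)

/-- `m(X)`: the number of edges of `G` with both endpoints in `X`
(ordered adjacent pairs, halved). -/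
def edgesIn (G : SimpleGraph V) [DecidableRel G.Adj] (X : Finset V) : ℕ :=
  ((X ×ˢ X).filter (fun p : V × V => G.Adj p.1 p.2)).card / 2

/-- The local sparsity `ζ_v = (1/Δ)·(Δ(Δ−1)/2 − m(N(v)))`. -/
noncomputable def sparsity (G : SimpleGraph V) [DecidableRel G.Adj] (v : V) : ℝ :=
  (1 / (G.maxDegree : ℝ)) *
    ((G.maxDegree : ℝ) * ((G.maxDegree : ℝ) - 1) / 2 - (edgesIn G (G.neighborFinset v) : ℝ))

/-- If `ε ≤ 1/3` and `v ∈ C i` in an `(ε,η)`-ACD, then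
`ζ_v ≥ (1−3ε)·a(v)/2` where `a(v) = |C i ∖ (N(v) ∪ {v})|` is the antidegree of `v`. -/
theorem stmt9 (G : SimpleGraph V) [DecidableRel G.Adj] (ε η : ℝ)
    (hε0 : 0 < ε) (hε : ε ≤ 1 / 3) (hη : η ∈ Set.Ioo (0 : ℝ) 1)
    {k : ℕ} (Vsp : Finset V) (C : Fin k → Finset V) (hACD : IsACD G ε η Vsp C)
    (i : Fin k) (v : V) (hv : v ∈ C i) :
    (1 - 3 * ε) * ((C i \ insert v (G.neighborFinset v)).card : ℝ) / 2 ≤ sparsity G v := by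
  classical
  set Δ : ℕ := G.maxDegree with hΔdef
  set N : Finset V := G.neighborFinset v with hN
  set A : Finset V := C i \ insert v N with hAdef
  have hAsub : A ⊆ C i := sdiff_subset
  have hAN : Disjoint A N := by
    rw [disjoint_left]
    intro x hx hxN
    exact (mem_sdiff.mp hx).2 (mem_insert_of_mem hxN)
  have hvA : v ∉ A := fun h => (mem_sdiff.mp h).2 (mem_insert_self _ _)
  have hvN : v ∉ N := by simp [hN]
  -- Δ ≥ 1
  have hcardpos : 1 ≤ (C i).card := card_pos.mpr ⟨v, hv⟩
  have hΔ1 : 1 ≤ Δ := by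
    rcases Nat.eq_zero_or_pos Δ with h0 | h; swap
    · exact h
    exfalso
    have h2 := hACD.card_upper i
    rw [← hΔdef, h0] at h2
    simp only [Nat.cast_zero, mul_zero] at h2
    have : (C i).card = 0 := by exact_mod_cast le_antisymm h2 (Nat.cast_nonneg _)
    omega
  have hΔR : (1 : ℝ) ≤ (Δ : ℝ) := by exact_mod_cast hΔ1
  have hΔpos : (0 : ℝ) < (Δ : ℝ) := by linarith
  -- |C i \ N| ≤ 2εΔ
  have hCN : ((C i \ N).card : ℝ) ≤ 2 * ε * Δ := by
    have h1 : (C i \ N).card + (C i ∩ N).card = (C i).card := card_sdiff_add_card_inter _ _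
    have h2 := hACD.card_upper i
    have h3 := hACD.nbr_lower i v hv
    rw [← hΔdef] at h2 h3
    rw [← hN] at h3
    have h4 : (C i ∩ N).card = (N ∩ C i).card := by rw [inter_comm]
    have h1' : ((C i \ N).card : ℝ) + ((N ∩ C i).card : ℝ) = ((C i).card : ℝ) := by
      rw [← h4]; exact_mod_cast h1
    linarith
  -- every u ∈ A has many neighbors in N
  have hu : ∀ u ∈ A, (1 - 3 * ε) * (Δ : ℝ) ≤ ((G.neighborFinset u ∩ N).card : ℝ) := by
    intro u huA
    have h3 := hACD.nbr_lower i u (hAsub huA)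
    rw [← hΔdef] at h3
    have hsub : G.neighborFinset u ∩ C i ⊆ (G.neighborFinset u ∩ N) ∪ (C i \ N) := by
      intro x hx
      rcases mem_inter.mp hx with ⟨hx1, hx2⟩
      by_cases hxN : x ∈ N
      · exact mem_union_left _ (mem_inter.mpr ⟨hx1, hxN⟩)
      · exact mem_union_right _ (mem_sdiff.mpr ⟨hx2, hxN⟩)
    have h5 : (G.neighborFinset u ∩ C i).card ≤
        (G.neighborFinset u ∩ N).card + (C i \ N).card :=
      (card_le_card hsub).trans (card_union_le _ _)
    have h5' : ((G.neighborFinset u ∩ C i).card : ℝ) ≤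
        ((G.neighborFinset u ∩ N).card : ℝ) + ((C i \ N).card : ℝ) := by exact_mod_cast h5
    linarith
  -- cardinalities as sums
  have hcast : ∀ (s t : Finset V), ∑ u ∈ s, (G.neighborFinset u ∩ t).card
      = ∑ u ∈ s, ∑ w ∈ t, (if G.Adj u w then 1 else 0) := by
    intro s t
    refine Finset.sum_congr rfl fun u _ => ?_
    rw [show G.neighborFinset u ∩ t = t.filter (fun w => G.Adj u w) by
      ext w; simp [SimpleGraph.mem_neighborFinset, and_comm], Finset.card_filter]
  -- double counting
  have hswap : (∑ u ∈ A, (G.neighborFinset u ∩ N).card)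
      = ∑ w ∈ N, (G.neighborFinset w ∩ A).card := by
    rw [hcast, hcast, Finset.sum_comm]
    exact Finset.sum_congr rfl fun w _ => Finset.sum_congr rfl fun u _ =>
      if_congr (G.adj_comm u w) rfl rfl
  -- the ordered pair count
  have hS : ((N ×ˢ N).filter (fun p : V × V => G.Adj p.1 p.2)).card
      = ∑ w ∈ N, (G.neighborFinset w ∩ N).card := by
    rw [Finset.card_filter, Finset.sum_product, hcast]
  -- per-w degree bound
  have hw : ∀ w ∈ N, (G.neighborFinset w ∩ N).card + (G.neighborFinset w ∩ A).card + 1 ≤ Δ := by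
    intro w hwN
    have hvw : v ∈ G.neighborFinset w := by
      have h : G.Adj v w := by rwa [hN, SimpleGraph.mem_neighborFinset] at hwN
      rw [SimpleGraph.mem_neighborFinset]
      exact h.symm
    have hd1 : Disjoint (G.neighborFinset w ∩ N) (G.neighborFinset w ∩ A) :=
      hAN.symm.mono inter_subset_right inter_subset_right
    have hd2 : Disjoint ((G.neighborFinset w ∩ N) ∪ (G.neighborFinset w ∩ A)) {v} := by
      rw [disjoint_singleton_right, mem_union]
      rintro (h | h)
      · exact hvN (mem_of_mem_inter_right h)
      · exact hvA (mem_of_mem_inter_right h)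
    have hsub : (G.neighborFinset w ∩ N) ∪ (G.neighborFinset w ∩ A) ∪ {v}
        ⊆ G.neighborFinset w := by
      intro x hx
      rcases mem_union.mp hx with hx | hx
      · rcases mem_union.mp hx with hx | hx
        exacts [mem_of_mem_inter_left hx, mem_of_mem_inter_left hx]
      · rw [mem_singleton.mp hx]; exact hvw
    calc (G.neighborFinset w ∩ N).card + (G.neighborFinset w ∩ A).card + 1
        = ((G.neighborFinset w ∩ N) ∪ (G.neighborFinset w ∩ A) ∪ {v}).card := by
          rw [card_union_of_disjoint hd2, card_union_of_disjoint hd1, card_singleton]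
      _ ≤ (G.neighborFinset w).card := card_le_card hsub
      _ ≤ Δ := by
          rw [SimpleGraph.card_neighborFinset_eq_degree]
          exact G.degree_le_maxDegree w
  -- summed bound
  have hsum : (∑ w ∈ N, (G.neighborFinset w ∩ N).card)
      + (∑ w ∈ N, (G.neighborFinset w ∩ A).card) + N.card ≤ N.card * Δ := by
    calc (∑ w ∈ N, (G.neighborFinset w ∩ N).card)
        + (∑ w ∈ N, (G.neighborFinset w ∩ A).card) + N.card
        = ∑ w ∈ N, ((G.neighborFinset w ∩ N).card + (G.neighborFinset w ∩ A).card + 1) := by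
          rw [Finset.sum_add_distrib, Finset.sum_add_distrib, Finset.sum_const, smul_eq_mul,
            mul_one]
      _ ≤ ∑ _w ∈ N, Δ := Finset.sum_le_sum hw
      _ = N.card * Δ := by rw [Finset.sum_const, smul_eq_mul]
  have hdΔ : N.card ≤ Δ := by
    rw [hN, SimpleGraph.card_neighborFinset_eq_degree]
    exact G.degree_le_maxDegree v
  -- lower bound for e
  have he : (A.card : ℝ) * ((1 - 3 * ε) * (Δ : ℝ))
      ≤ ((∑ w ∈ N, (G.neighborFinset w ∩ A).card : ℕ) : ℝ) := by
    rw [← hswap]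
    push_cast
    calc (A.card : ℝ) * ((1 - 3 * ε) * (Δ : ℝ))
        = ∑ _u ∈ A, ((1 - 3 * ε) * (Δ : ℝ)) := by rw [Finset.sum_const, nsmul_eq_mul]
      _ ≤ ∑ u ∈ A, ((G.neighborFinset u ∩ N).card : ℝ) := Finset.sum_le_sum hu
  -- edges bound
  set S : ℕ := ((N ×ˢ N).filter (fun p : V × V => G.Adj p.1 p.2)).card with hSdef
  have hm : ((edgesIn G N : ℕ) : ℝ) ≤ (S : ℝ) / 2 := by
    rw [show edgesIn G N = S / 2 from rfl]
    exact_mod_cast Nat.cast_div_le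
  have hsumR : (S : ℝ) + ((∑ w ∈ N, (G.neighborFinset w ∩ A).card : ℕ) : ℝ) + (N.card : ℝ)
      ≤ (N.card : ℝ) * (Δ : ℝ) := by
    rw [hS]
    exact_mod_cast hsum
  have hdΔR : (N.card : ℝ) ≤ (Δ : ℝ) := by exact_mod_cast hdΔ
  -- conclude
  rw [sparsity, ← hΔdef, ← hN, one_div, inv_mul_eq_div, le_div_iff₀ hΔpos]
  have hprod : (0 : ℝ) ≤ ((Δ : ℝ) - (N.card : ℝ)) * ((Δ : ℝ) - 1) :=
    mul_nonneg (by linarith) (by linarith)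
  nlinarith [hm, hsumR, he, hprod]
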